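/- Suppose C is malnormal in A (as a subgroup of the factor A of G = A ∗_C B). If g, h ∈ C are conjugate in G, then they are conjugate by an element of B: there exists b ∈ B with b⁻¹ g b = h. -/

import Mathlib

open Monoid

universe u

/-- The two factors of the amalgam, indexed by `Bool`. -/
def Fac (A B : Type u) : Bool → Type u
  | true => A
  | false => B

instance FacGroup (A B : Type u) [Group A] [Group B] : (b : Bool) → Group (Fac A B b)
  | true => inferInstanceAs (Group A)
  | false => inferInstanceAs (Group B)

variable {A B C : Type u} [Group A] [Group B] [Group C]

/-- The family of monomorphisms `C → A`, `C → B`. -/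
def amalgHom (φ : C →* A) (ψ : C →* B) : (b : Bool) → C →* Fac A B b
  | true => φ
  | false => ψ

variable (φ : C →* A) (ψ : C →* B)

/-- The amalgamated free product `G = A ∗_C B`, i.e. the pushout of `φ` and `ψ`. -/
abbrev Amalg : Type u := Monoid.PushoutI (amalgHom φ ψ)

/-- The factor `A`, identified with its image in `G = A ∗_C B`. -/
def facA : Subgroup (Amalg φ ψ) := (Monoid.PushoutI.of (φ := amalgHom φ ψ) true).range

/-- The factor `B`, identified with its image in `G = A ∗_C B`. -/
def facB : Subgroup (Amalg φ ψ) := (Monoid.PushoutI.of (φ := amalgHom φ ψ) false).range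

/-- The amalgamated subgroup `C`, identified with its image in `G = A ∗_C B`. -/
def amalgC : Subgroup (Amalg φ ψ) := (Monoid.PushoutI.base (amalgHom φ ψ)).range

/-- `c * g₁ ⋯ gₙ` (with the list `L = [g₁, …, gₙ]`) is a reduced form:
`c ∈ C`, each `gᵢ ∈ (A ∪ B) ∖ C`, and consecutive letters lie in different factors. -/
def ReducedForm (c : Amalg φ ψ) (L : List (Amalg φ ψ)) : Prop :=
  c ∈ amalgC φ ψ ∧
  (∀ x ∈ L, (x ∈ facA φ ψ ∨ x ∈ facB φ ψ) ∧ x ∉ amalgC φ ψ) ∧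
  L.Chain' (fun x y => (x ∈ facA φ ψ → y ∈ facB φ ψ) ∧ (x ∈ facB φ ψ → y ∈ facA φ ψ))

/-- A reduced form `c * g₁ ⋯ gₙ` is cyclically reduced if `n = 0`, or `n = 1` and the
element is not conjugate to an element of `C`, or `n ≥ 2` and `g₁`, `gₙ` lie in different
factors. -/
def CyclicallyReducedForm (c : Amalg φ ψ) (L : List (Amalg φ ψ)) : Prop :=
  ReducedForm φ ψ c L ∧
  (L.length = 0 ∨
    (L.length = 1 ∧ ∀ x : Amalg φ ψ, x⁻¹ * (c * L.prod) * x ∉ amalgC φ ψ) ∨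
    (2 ≤ L.length ∧ ∀ x y : Amalg φ ψ, x ∈ L.head? → y ∈ L.getLast? →
      ((x ∈ facA φ ψ → y ∈ facB φ ψ) ∧ (x ∈ facB φ ψ → y ∈ facA φ ψ))))

/-- An element of `G = A ∗_C B` is cyclically reduced if it has a cyclically reduced
reduced form. -/
def CyclicallyReduced (g : Amalg φ ψ) : Prop :=
  ∃ (c : Amalg φ ψ) (L : List (Amalg φ ψ)), g = c * L.prod ∧ CyclicallyReducedForm φ ψ c L

/-- `C` is malnormal in `K` (both viewed as subgroups of an ambient group):
`C ∩ x⁻¹ C x = {1}` for every `x ∈ K ∖ C`. -/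
def MalnormalIn {G : Type*} [Group G] (C K : Subgroup G) : Prop :=
  ∀ x ∈ K, x ∉ C → ∀ y ∈ C, x * y * x⁻¹ ∈ C → y = 1

section Aux

open Monoid.PushoutI Monoid.CoprodI Function

variable {ι : Type*} {H : Type*} [Group H] {G : ι → Type*} [∀ i, Group (G i)]
  {φ' : ∀ i, H →* G i}

lemma aux_ofCoprodI_word_prod (w : Monoid.CoprodI.Word G) :
    Monoid.PushoutI.ofCoprodI (φ := φ') w.prod
      = (w.toList.map fun l => Monoid.PushoutI.of (φ := φ') l.1 l.2).prod := by
  rw [Monoid.CoprodI.Word.prod, map_list_prod, List.map_map]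
  congr 1

/-- Conjugating a letter `of i a` with `a` outside the base by a reduced word not starting
with index `i` gives an element outside the base subgroup. -/
lemma aux_conj_not_in_base (hφ' : ∀ i, Function.Injective (φ' i))
    {w : Monoid.CoprodI.Word G} (hw : Monoid.PushoutI.Reduced φ' w) {i : ι}
    (hidx : w.fstIdx ≠ some i) {a : G i} (ha : a ∉ (φ' i).range) :
    (Monoid.PushoutI.ofCoprodI (φ := φ') w.prod)⁻¹ * Monoid.PushoutI.of i a *
      Monoid.PushoutI.ofCoprodI w.prod ∉ (Monoid.PushoutI.base φ').range := by
  classical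
  intro hmem
  have ha1 : a ≠ 1 := by rintro rfl; exact ha (one_mem _)
  set f : (Σ j, G j) → (Σ j, G j) := fun p => ⟨p.1, p.2⁻¹⟩ with hf
  have hidx' : ∀ l ∈ w.toList.head?, i ≠ Sigma.fst l :=
    Monoid.CoprodI.Word.fstIdx_ne_iff.mp hidx
  -- build the word  w⁻¹ · a · w
  have hne_one : ∀ l ∈ (w.toList.map f).reverse ++ ⟨i, a⟩ :: w.toList, Sigma.snd l ≠ 1 := by
    intro l hl
    rcases List.mem_append.1 hl with hl | hl
    · rcases List.mem_map.1 (List.mem_reverse.1 hl) with ⟨p, hp, rfl⟩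
      simpa [f] using w.ne_one p hp
    · rcases List.mem_cons.1 hl with rfl | hl
      · exact ha1
      · exact w.ne_one l hl
  have hchain : ((w.toList.map f).reverse ++ ⟨i, a⟩ :: w.toList).Chain'
      (fun l l' => Sigma.fst l ≠ Sigma.fst l') := by
    refine List.isChain_append.2 ⟨?_, ?_, ?_⟩
    · rw [List.isChain_reverse, List.isChain_map]
      exact w.chain_ne.imp (fun _ _ h => h.symm)
    · exact List.isChain_cons.2 ⟨fun y hy => (hidx' y hy), w.chain_ne⟩
    · intro x hx y hy
      rw [List.getLast?_reverse, List.head?_map] at hx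
      rcases Option.map_eq_some_iff.1 hx with ⟨p, hp, rfl⟩
      simp only [List.head?_cons, Option.mem_def, Option.some.injEq] at hy
      subst hy
      exact fun hEq => hidx' p hp hEq.symm
  set W : Monoid.CoprodI.Word G :=
    ⟨(w.toList.map f).reverse ++ ⟨i, a⟩ :: w.toList, hne_one, hchain⟩ with hW
  have hWred : Monoid.PushoutI.Reduced φ' W := by
    intro l hl
    simp only [hW] at hl
    rcases List.mem_append.1 hl with hl | hl
    · rcases List.mem_map.1 (List.mem_reverse.1 hl) with ⟨p, hp, rfl⟩
      simpa [f] using hw p hp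
    · rcases List.mem_cons.1 hl with rfl | hl
      · exact ha
      · exact hw l hl
  have hprod : Monoid.PushoutI.ofCoprodI (φ := φ') W.prod
      = (Monoid.PushoutI.ofCoprodI (φ := φ') w.prod)⁻¹ * Monoid.PushoutI.of i a *
        Monoid.PushoutI.ofCoprodI w.prod := by
    rw [aux_ofCoprodI_word_prod, aux_ofCoprodI_word_prod]
    show (((w.toList.map f).reverse ++ ⟨i, a⟩ :: w.toList).map
      (fun l => Monoid.PushoutI.of (φ := φ') l.1 l.2)).prod = _
    rw [List.map_append, List.prod_append, List.map_cons, List.prod_cons,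
      List.map_reverse, List.map_map]
    have : (w.toList.map ((fun l : Σ j, G j => Monoid.PushoutI.of (φ := φ') l.1 l.2) ∘ f))
        = (w.toList.map fun l => Monoid.PushoutI.of (φ := φ') l.1 l.2).map (·⁻¹) := by
      rw [List.map_map]
      apply List.map_congr_left
      intro l _
      simp [f, Function.comp]
    rw [this, ← List.prod_inv_reverse, mul_assoc]
  rw [← hprod] at hmem
  have := hWred.eq_empty_of_mem_range hφ' hmem
  have hlist : W.toList = [] := by rw [this]; rfl
  simp [hW] at hlist

end Aux

section BoolAux

open Monoid.PushoutI

lemma amalgHom_injective (hφ : Function.Injective φ) (hψ : Function.Injective ψ) :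
    ∀ b, Function.Injective (amalgHom φ ψ b)
  | true => hφ
  | false => hψ

lemma amalgC_le_facB : amalgC φ ψ ≤ facB φ ψ := by
  rintro x ⟨c, rfl⟩
  exact ⟨ψ c, Monoid.PushoutI.of_apply_eq_base (amalgHom φ ψ) false c⟩

lemma amalgC_le_facA : amalgC φ ψ ≤ facA φ ψ := by
  rintro x ⟨c, rfl⟩
  exact ⟨φ c, Monoid.PushoutI.of_apply_eq_base (amalgHom φ ψ) true c⟩

lemma of_mem_amalgC_iff (hφ : Function.Injective φ) (hψ : Function.Injective ψ)
    {i : Bool} {g : Fac A B i} :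
    Monoid.PushoutI.of (φ := amalgHom φ ψ) i g ∈ amalgC φ ψ ↔
      g ∈ (amalgHom φ ψ i).range := by
  constructor
  · rintro ⟨c, hc⟩
    refine ⟨c, ?_⟩
    have := Monoid.PushoutI.of_apply_eq_base (amalgHom φ ψ) i c
    exact Monoid.PushoutI.of_injective (amalgHom_injective φ ψ hφ hψ) i (this.trans hc)
  · rintro ⟨c, rfl⟩
    exact ⟨c, (Monoid.PushoutI.of_apply_eq_base (amalgHom φ ψ) i c).symm⟩

/-- Main induction: conjugation by a reduced word. -/
lemma key_reduced_word (hφ : Function.Injective φ) (hψ : Function.Injective ψ)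
    (hmalA : MalnormalIn (amalgC φ ψ) (facA φ ψ)) (w : Monoid.CoprodI.Word (Fac A B)) :
    Monoid.PushoutI.Reduced (amalgHom φ ψ) w →
    ∀ g h : Amalg φ ψ, g ∈ amalgC φ ψ → h ∈ amalgC φ ψ →
      (Monoid.PushoutI.ofCoprodI w.prod)⁻¹ * g * Monoid.PushoutI.ofCoprodI w.prod = h →
      ∃ b ∈ facB φ ψ, b⁻¹ * g * b = h := by
  classical
  induction w using Monoid.CoprodI.Word.consRecOn with
  | empty =>
    intro _ g h hg hh heq
    refine ⟨1, one_mem _, ?_⟩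
    simpa using heq
  | cons i g₀ w hIdx hg1 ih =>
    intro hw g h hg hh heq
    have hred : Monoid.PushoutI.Reduced (amalgHom φ ψ) w :=
      fun l hl => hw l (List.mem_cons_of_mem _ hl)
    have hg₀r : g₀ ∉ (amalgHom φ ψ i).range := hw ⟨i, g₀⟩ (List.mem_cons_self)
    rw [Monoid.CoprodI.Word.prod_cons, map_mul, Monoid.PushoutI.ofCoprodI_of] at heq
    obtain ⟨c, hc⟩ := hg
    set x₀ : Amalg φ ψ := Monoid.PushoutI.of (φ := amalgHom φ ψ) i g₀ with hx₀
    have hconj_eq : x₀⁻¹ * g * x₀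
        = Monoid.PushoutI.of (φ := amalgHom φ ψ) i (g₀⁻¹ * amalgHom φ ψ i c * g₀) := by
      rw [map_mul, map_mul, map_inv, Monoid.PushoutI.of_apply_eq_base, hc, hx₀]
    have heq' : (Monoid.PushoutI.ofCoprodI w.prod)⁻¹ * (x₀⁻¹ * g * x₀) *
        Monoid.PushoutI.ofCoprodI w.prod = h := by
      rw [← heq]; group
    by_cases hcC : x₀⁻¹ * g * x₀ ∈ amalgC φ ψ
    · cases i with
      | true =>
        -- malnormality forces g = 1
        have hx₀A : x₀⁻¹ ∈ facA φ ψ := by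
          exact inv_mem ⟨g₀, rfl⟩
        have hx₀C : x₀⁻¹ ∉ amalgC φ ψ := by
          intro hmem
          exact hg₀r ((of_mem_amalgC_iff φ ψ hφ hψ).1 (by simpa using inv_mem hmem))
        have hg1' : g = 1 := by
          refine hmalA x₀⁻¹ hx₀A hx₀C g ⟨c, hc⟩ ?_
          simpa [mul_assoc] using hcC
        subst hg1'
        have hh1 : h = 1 := by
          rw [← heq]; group
        exact ⟨1, one_mem _, by simp [hh1]⟩
      | false =>
        obtain ⟨b', hb'B, hb'⟩ := ih hred (x₀⁻¹ * g * x₀) h hcC hh heq'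
        refine ⟨x₀ * b', mul_mem ⟨g₀, rfl⟩ hb'B, ?_⟩
        rw [← hb']; group
    · exfalso
      set a : Fac A B i := g₀⁻¹ * amalgHom φ ψ i c * g₀ with hA
      have haR : a ∉ (amalgHom φ ψ i).range := by
        intro hmem
        exact hcC (hconj_eq ▸ (of_mem_amalgC_iff φ ψ hφ hψ).2 hmem)
      have := aux_conj_not_in_base (amalgHom_injective φ ψ hφ hψ) hred hIdx haR
      apply this
      rw [← hconj_eq]
      exact heq' ▸ hh

end BoolAux

/-- If `C` is malnormal in the factor `A` of `G = A ∗_C B` and `g, h ∈ C` are conjugate in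
`G`, then they are conjugate by an element of `B`. -/
theorem conj_in_B_of_malnormal_A
    (hφ : Function.Injective φ) (hψ : Function.Injective ψ)
    (hmalA : MalnormalIn (amalgC φ ψ) (facA φ ψ))
    (g h : Amalg φ ψ) (hg : g ∈ amalgC φ ψ) (hh : h ∈ amalgC φ ψ)
    (hconj : ∃ x : Amalg φ ψ, x⁻¹ * g * x = h) :
    ∃ b ∈ facB φ ψ, b⁻¹ * g * b = h := by
  classical
  obtain ⟨x, hx⟩ := hconj
  obtain ⟨d⟩ := Monoid.PushoutI.NormalWord.transversal_nonempty (amalgHom φ ψ)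
    (amalgHom_injective φ ψ hφ hψ)
  set n := Monoid.PushoutI.NormalWord.equiv (d := d) x with hn
  have hxprod : n.prod = x := by
    exact (Monoid.PushoutI.NormalWord.equiv (d := d)).symm_apply_apply x
  have hred : Monoid.PushoutI.Reduced (amalgHom φ ψ) n.toWord := by
    rintro ⟨j, gl⟩ hmem hrange
    have hset : gl ∈ d.set j := n.normalized j gl hmem
    have hne : gl ≠ 1 := n.toWord.ne_one _ hmem
    have hcompl := d.compl j
    have hinj := hcompl.1
    have h1 : (fun p : ((amalgHom φ ψ j).range : Set (Fac A B j)) × (d.set j) =>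
        (p.1 : Fac A B j) * p.2) (⟨⟨gl, hrange⟩, ⟨1, d.one_mem j⟩⟩)
        = (fun p : ((amalgHom φ ψ j).range : Set (Fac A B j)) × (d.set j) =>
        (p.1 : Fac A B j) * p.2) (⟨⟨1, one_mem _⟩, ⟨gl, hset⟩⟩) := by
      simp
    have := hinj h1
    apply hne
    have := congrArg (fun p => (p.1.1 : Fac A B j)) this
    simpa using this
  have hxeq : x = Monoid.PushoutI.base (amalgHom φ ψ) n.head *
      Monoid.PushoutI.ofCoprodI n.toWord.prod := by
    rw [← hxprod]; rfl
  set g' : Amalg φ ψ := (Monoid.PushoutI.base (amalgHom φ ψ) n.head)⁻¹ * g *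
    Monoid.PushoutI.base (amalgHom φ ψ) n.head with hg'
  have hg'C : g' ∈ amalgC φ ψ := by
    exact mul_mem (mul_mem (inv_mem ⟨n.head, rfl⟩) hg) ⟨n.head, rfl⟩
  have heq : (Monoid.PushoutI.ofCoprodI n.toWord.prod)⁻¹ * g' *
      Monoid.PushoutI.ofCoprodI n.toWord.prod = h := by
    rw [hg', ← hx, hxeq]; group
  obtain ⟨b', hb'B, hb'⟩ := key_reduced_word φ ψ hφ hψ hmalA n.toWord hred g' h hg'C hh heq
  refine ⟨Monoid.PushoutI.base (amalgHom φ ψ) n.head * b',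
    mul_mem (amalgC_le_facB φ ψ ⟨n.head, rfl⟩) hb'B, ?_⟩
  rw [← hb', hg']; group
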